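/- Let n₁, n₂ ≥ 1 be integers, x₁, x₂ ∈ ℤ, and a₁, b₁, a₂, b₂ ∈ ℝ. For 1 ≤ k ≤ n₂ set Ψ^{(1)}_{n₁−k}(x₁) = (1/(2πi)) ∮_{|w−1|=R} (w−1)^{n₁−k} w^{−(x₁+n₁+1)} e^{a₁w + b₁/w} dw and Φ^{(2)}_{n₂−k}(x₂) = (1/(2πi)) ∮_{|z−1|=r} z^{x₂+n₂} (z−1)^{−(n₂−k+1)} e^{−a₂z − b₂/z} dz. Then for any radii 0 < r < 1 < R, ∑_{k=1}^{n₂} Ψ^{(1)}_{n₁−k}(x₁) Φ^{(2)}_{n₂−k}(x₂) = (1/(2πi)²) ∮_{|z−1|=r} dz ∮_{|w−1|=R} dw e^{a₁w + b₁/w − a₂z − b₂/z} (w−1)^{n₁} z^{x₂+n₂} / ( (z−1)^{n₂} w^{x₁+n₁+1} (w−z) ). -/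

import Mathlib

open Complex MeasureTheory
open scoped Real

lemma geom_aux (a b : ℂ) (ha : a ≠ 0) (hb : b ≠ 0) (hab : a ≠ b) (N : ℤ) (n : ℕ) :
    ∑ k ∈ Finset.Icc 1 n, a ^ (N - (k : ℤ)) * b ^ (-((n : ℤ) - (k : ℤ) + 1))
      = (a ^ N * ((b ^ n : ℂ))⁻¹ - a ^ (N - (n : ℤ))) / (a - b) := by
  have hab' : a - b ≠ 0 := sub_ne_zero.2 hab
  set t : ℕ → ℂ := fun j => a ^ (N - (j : ℤ)) * b ^ ((j : ℤ) - (n : ℤ)) / (a - b) with ht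
  have hterm : ∀ i : ℕ, a ^ (N - ((1 + i : ℕ) : ℤ)) * b ^ (-((n : ℤ) - ((1 + i : ℕ) : ℤ) + 1))
      = t i - t (i + 1) := by
    intro i
    simp only [ht]
    push_cast
    have h1 : N - (i : ℤ) = 1 + (N - ((i : ℤ) + 1)) := by ring
    have h2 : (i : ℤ) + 1 - n = 1 + ((i : ℤ) - n) := by ring
    have h3 : -((n : ℤ) - (1 + i) + 1) = (i : ℤ) - n := by ring
    have h4 : N - (1 + (i : ℤ)) = N - ((i : ℤ) + 1) := by ring
    rw [h1, h2, h3, h4, zpow_add₀ ha, zpow_add₀ hb, zpow_one, zpow_one,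
      div_sub_div_same, eq_div_iff hab']
    ring
  rw [show Finset.Icc 1 n = Finset.Ico 1 (n + 1) by rfl, Finset.sum_Ico_eq_sum_range]
  simp only [Nat.add_sub_cancel]
  rw [Finset.sum_congr rfl fun i _ => hterm i, Finset.sum_range_sub' t n]
  simp only [ht, Nat.cast_zero, sub_zero, zero_sub]
  rw [div_sub_div_same, sub_self, zpow_zero, mul_one, zpow_neg, zpow_natCast]

lemma key_pointwise (n₁ n₂ : ℕ) (x₁ x₂ : ℤ) (a₁ b₁ a₂ b₂ : ℝ) {w z : ℂ}
    (hw0 : w ≠ 0) (hw1 : w ≠ 1) (hz1 : z ≠ 1) (hwz : w ≠ z) :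
    ∑ k ∈ Finset.Icc 1 n₂,
      ((w - 1) ^ ((n₁ : ℤ) - k) * w ^ (-(x₁ + (n₁ : ℤ) + 1)) *
          Complex.exp ((a₁ : ℂ) * w + (b₁ : ℂ) / w)) *
      (z ^ (x₂ + (n₂ : ℤ)) * (z - 1) ^ (-((n₂ : ℤ) - k + 1)) *
          Complex.exp (-((a₂ : ℂ) * z) - (b₂ : ℂ) / z))
    = Complex.exp ((a₁ : ℂ) * w + (b₁ : ℂ) / w - (a₂ : ℂ) * z - (b₂ : ℂ) / z) *
          (w - 1) ^ n₁ * z ^ (x₂ + (n₂ : ℤ)) /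
          ((z - 1) ^ n₂ * w ^ (x₁ + (n₁ : ℤ) + 1) * (w - z))
      - Complex.exp ((a₁ : ℂ) * w + (b₁ : ℂ) / w - (a₂ : ℂ) * z - (b₂ : ℂ) / z) *
          (w - 1) ^ ((n₁ : ℤ) - n₂) * z ^ (x₂ + (n₂ : ℤ)) * w ^ (-(x₁ + (n₁ : ℤ) + 1)) /
          (w - z) := by
  have ha : w - 1 ≠ 0 := sub_ne_zero.2 hw1
  have hb : z - 1 ≠ 0 := sub_ne_zero.2 hz1
  have hab : w - 1 ≠ z - 1 := fun h => hwz (by linear_combination h)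
  have hE : Complex.exp ((a₁ : ℂ) * w + (b₁ : ℂ) / w) *
      Complex.exp (-((a₂ : ℂ) * z) - (b₂ : ℂ) / z)
      = Complex.exp ((a₁ : ℂ) * w + (b₁ : ℂ) / w - (a₂ : ℂ) * z - (b₂ : ℂ) / z) := by
    rw [← Complex.exp_add]; ring_nf
  have step1 : ∑ k ∈ Finset.Icc 1 n₂,
      ((w - 1) ^ ((n₁ : ℤ) - k) * w ^ (-(x₁ + (n₁ : ℤ) + 1)) *
          Complex.exp ((a₁ : ℂ) * w + (b₁ : ℂ) / w)) *
      (z ^ (x₂ + (n₂ : ℤ)) * (z - 1) ^ (-((n₂ : ℤ) - k + 1)) *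
          Complex.exp (-((a₂ : ℂ) * z) - (b₂ : ℂ) / z))
      = (w ^ (-(x₁ + (n₁ : ℤ) + 1)) * z ^ (x₂ + (n₂ : ℤ)) *
          Complex.exp ((a₁ : ℂ) * w + (b₁ : ℂ) / w - (a₂ : ℂ) * z - (b₂ : ℂ) / z)) *
        ∑ k ∈ Finset.Icc 1 n₂,
          (w - 1) ^ ((n₁ : ℤ) - (k : ℤ)) * (z - 1) ^ (-((n₂ : ℤ) - (k : ℤ) + 1)) := by
    rw [Finset.mul_sum]
    refine Finset.sum_congr rfl fun k _ => ?_
    rw [← hE]; ring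
  rw [step1, geom_aux _ _ ha hb hab (n₁ : ℤ) n₂]
  have hwz' : w - z ≠ 0 := sub_ne_zero.2 hwz
  have habz : w - 1 - (z - 1) = w - z := by ring
  have hW : w ^ (x₁ + (n₁ : ℤ) + 1) ≠ 0 := zpow_ne_zero _ hw0
  have hbn : (z - 1) ^ n₂ ≠ 0 := pow_ne_zero _ hb
  rw [habz, zpow_neg, ← zpow_natCast (w - 1) n₁]
  field_simp

lemma circleIntegral_finset_sum {ι : Type*} (s : Finset ι) (f : ι → ℂ → ℂ) (c : ℂ) (R : ℝ)
    (h : ∀ i ∈ s, CircleIntegrable (f i) c R) :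
    (∮ z in C(c, R), ∑ i ∈ s, f i z) = ∑ i ∈ s, ∮ z in C(c, R), f i z := by
  simp only [circleIntegral, Finset.smul_sum]
  exact intervalIntegral.integral_finset_sum fun i hi => (h i hi).out

lemma circleIntegral_swap (f : ℂ → ℂ → ℂ) (c₁ c₂ : ℂ) (R₁ R₂ : ℝ)
    (h : Continuous fun p : ℝ × ℝ => f (circleMap c₁ R₁ p.1) (circleMap c₂ R₂ p.2)) :
    (∮ w in C(c₁, R₁), ∮ z in C(c₂, R₂), f w z) = ∮ z in C(c₂, R₂), ∮ w in C(c₁, R₁), f w z := by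
  have h2π : (0 : ℝ) ≤ 2 * Real.pi := by positivity
  set g : ℝ → ℝ → ℂ := fun θ η =>
    deriv (circleMap c₁ R₁) θ • (deriv (circleMap c₂ R₂) η •
      f (circleMap c₁ R₁ θ) (circleMap c₂ R₂ η)) with hg
  have hgc : Continuous (Function.uncurry g) := by
    simp only [hg, Function.uncurry, deriv_circleMap]
    exact (((continuous_circleMap 0 R₁).fst').mul continuous_const).smul
      ((((continuous_circleMap 0 R₂).snd').mul continuous_const).smul h)
  have hint : Integrable (Function.uncurry g)
      ((volume.restrict (Set.Ioc (0:ℝ) (2*Real.pi))).prod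
        (volume.restrict (Set.Ioc (0:ℝ) (2*Real.pi)))) := by
    rw [Measure.prod_restrict, ← Measure.volume_eq_prod]
    exact (hgc.continuousOn.integrableOn_compact (isCompact_Icc.prod isCompact_Icc)).mono_set
      (Set.prod_mono Set.Ioc_subset_Icc_self Set.Ioc_subset_Icc_self)
  calc (∮ w in C(c₁, R₁), ∮ z in C(c₂, R₂), f w z)
      = ∫ θ in Set.Ioc (0:ℝ) (2*Real.pi), ∫ η in Set.Ioc (0:ℝ) (2*Real.pi), g θ η := by
        rw [circleIntegral, intervalIntegral.integral_of_le h2π]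
        refine setIntegral_congr_fun measurableSet_Ioc fun θ _ => ?_
        rw [circleIntegral, intervalIntegral.integral_of_le h2π, ← integral_smul]
    _ = ∫ η in Set.Ioc (0:ℝ) (2*Real.pi), ∫ θ in Set.Ioc (0:ℝ) (2*Real.pi), g θ η :=
        integral_integral_swap hint
    _ = ∮ z in C(c₂, R₂), ∮ w in C(c₁, R₁), f w z := by
        rw [circleIntegral, intervalIntegral.integral_of_le h2π]
        refine setIntegral_congr_fun measurableSet_Ioc fun η _ => ?_
        rw [circleIntegral, intervalIntegral.integral_of_le h2π, ← integral_smul]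
        refine setIntegral_congr_fun measurableSet_Ioc fun θ _ => ?_
        simp only [hg, smul_eq_mul]
        ring

set_option maxHeartbeats 1000000 in
/-- summation identity
`∑_{k=1}^{n₂} Ψ^{(1)}_{n₁−k}(x₁) Φ^{(2)}_{n₂−k}(x₂)` equals the double contour
integral of the main part of the finite-time step-initial-condition PushASEP kernel. -/
theorem stmt9 (n₁ n₂ : ℕ) (hn₁ : 1 ≤ n₁) (hn₂ : 1 ≤ n₂) (x₁ x₂ : ℤ)
    (a₁ b₁ a₂ b₂ : ℝ) (r R : ℝ) (hr0 : 0 < r) (hr1 : r < 1) (hR : 1 < R) :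
    ∑ k ∈ Finset.Icc 1 n₂,
      ((2 * (Real.pi : ℂ) * Complex.I)⁻¹ *
        ∮ w in C(1, R), (w - 1) ^ ((n₁ : ℤ) - k) * w ^ (-(x₁ + (n₁ : ℤ) + 1)) *
          Complex.exp ((a₁ : ℂ) * w + (b₁ : ℂ) / w)) *
      ((2 * (Real.pi : ℂ) * Complex.I)⁻¹ *
        ∮ z in C(1, r), z ^ (x₂ + (n₂ : ℤ)) * (z - 1) ^ (-((n₂ : ℤ) - k + 1)) *
          Complex.exp (-((a₂ : ℂ) * z) - (b₂ : ℂ) / z))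
    = (2 * (Real.pi : ℂ) * Complex.I)⁻¹ *
        ∮ z in C(1, r), (2 * (Real.pi : ℂ) * Complex.I)⁻¹ *
          ∮ w in C(1, R),
            Complex.exp ((a₁ : ℂ) * w + (b₁ : ℂ) / w - (a₂ : ℂ) * z - (b₂ : ℂ) / z) *
              (w - 1) ^ n₁ * z ^ (x₂ + (n₂ : ℤ)) /
              ((z - 1) ^ n₂ * w ^ (x₁ + (n₁ : ℤ) + 1) * (w - z)) := by
  have hR0 : (0 : ℝ) ≤ R := by linarith
  have hr0' : (0 : ℝ) ≤ r := hr0.le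
  set c0 : ℂ := (2 * (Real.pi : ℂ) * Complex.I)⁻¹ with hc0
  set F : ℕ → ℂ → ℂ := fun k w => (w - 1) ^ ((n₁ : ℤ) - k) * w ^ (-(x₁ + (n₁ : ℤ) + 1)) *
      Complex.exp ((a₁ : ℂ) * w + (b₁ : ℂ) / w) with hF
  set G : ℕ → ℂ → ℂ := fun k z => z ^ (x₂ + (n₂ : ℤ)) * (z - 1) ^ (-((n₂ : ℤ) - k + 1)) *
      Complex.exp (-((a₂ : ℂ) * z) - (b₂ : ℂ) / z) with hG
  set M : ℂ → ℂ → ℂ := fun w z =>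
      Complex.exp ((a₁ : ℂ) * w + (b₁ : ℂ) / w - (a₂ : ℂ) * z - (b₂ : ℂ) / z) *
        (w - 1) ^ n₁ * z ^ (x₂ + (n₂ : ℤ)) /
        ((z - 1) ^ n₂ * w ^ (x₁ + (n₁ : ℤ) + 1) * (w - z)) with hM
  set X : ℂ → ℂ → ℂ := fun w z =>
      Complex.exp ((a₁ : ℂ) * w + (b₁ : ℂ) / w - (a₂ : ℂ) * z - (b₂ : ℂ) / z) *
        (w - 1) ^ ((n₁ : ℤ) - n₂) * z ^ (x₂ + (n₂ : ℤ)) * w ^ (-(x₁ + (n₁ : ℤ) + 1)) /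
        (w - z) with hX
  -- sphere membership facts
  have hwsph : ∀ w ∈ Metric.sphere (1 : ℂ) R, w ≠ 0 ∧ w ≠ 1 := by
    intro w hw
    rw [mem_sphere_iff_norm] at hw
    constructor
    · rintro rfl; simp at hw; rw [← hw] at hR; exact lt_irrefl _ hR
    · rintro rfl; simp at hw; rw [← hw] at hR; linarith
  have hzsph : ∀ z ∈ Metric.sphere (1 : ℂ) r, z ≠ 0 ∧ z ≠ 1 := by
    intro z hz
    rw [mem_sphere_iff_norm] at hz
    constructor
    · rintro rfl; simp at hz; rw [← hz] at hr1; exact lt_irrefl _ hr1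
    · rintro rfl; simp at hz; rw [← hz] at hr0; exact lt_irrefl _ hr0
  have hball : ∀ w ∈ Metric.sphere (1 : ℂ) R, ∀ z ∈ Metric.closedBall (1 : ℂ) r,
      z ≠ 0 ∧ w ≠ z := by
    intro w hw z hz
    rw [mem_sphere_iff_norm] at hw
    rw [Metric.mem_closedBall, Complex.dist_eq] at hz
    constructor
    · rintro rfl; simp at hz; linarith
    · rintro rfl; rw [hw] at hz; linarith
  -- continuity of G k on the small sphere
  have hGc : ∀ k : ℕ, ContinuousOn (G k) (Metric.sphere (1 : ℂ) r) := by
    intro k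
    simp only [hG]
    refine ((ContinuousOn.zpow₀ continuousOn_id _ fun z hz => Or.inl (hzsph z hz).1).mul
      ((continuousOn_id.sub continuousOn_const).zpow₀ _
        fun z hz => Or.inl (sub_ne_zero.2 (hzsph z hz).2))).mul
      (Complex.continuous_exp.comp_continuousOn ?_)
    exact ((continuousOn_const.mul continuousOn_id).neg).sub
      (continuousOn_const.div continuousOn_id fun z hz => (hzsph z hz).1)
  -- continuity of F k on the big sphere
  have hFc : ∀ k : ℕ, ContinuousOn (F k) (Metric.sphere (1 : ℂ) R) := by
    intro k
    simp only [hF]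
    refine (((continuousOn_id.sub continuousOn_const).zpow₀ _
        fun w hw => Or.inl (sub_ne_zero.2 (hwsph w hw).2)).mul
      (ContinuousOn.zpow₀ continuousOn_id _ fun w hw => Or.inl (hwsph w hw).1)).mul
      (Complex.continuous_exp.comp_continuousOn ?_)
    exact (continuousOn_const.mul continuousOn_id).add
      (continuousOn_const.div continuousOn_id fun w hw => (hwsph w hw).1)
  -- continuity of uncurried M on the product of spheres
  have hMc : ContinuousOn (fun p : ℂ × ℂ => M p.1 p.2)
      (Metric.sphere (1 : ℂ) R ×ˢ Metric.sphere (1 : ℂ) r) := by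
    simp only [hM]
    refine ContinuousOn.div ?_ ?_ ?_
    · refine ((Complex.continuous_exp.comp_continuousOn ?_).mul
        ((continuousOn_fst.sub continuousOn_const).pow n₁)).mul
        (ContinuousOn.zpow₀ continuousOn_snd _ fun p hp => Or.inl (hzsph p.2 hp.2).1)
      exact (((continuousOn_const.mul continuousOn_fst).add
        (continuousOn_const.div continuousOn_fst fun p hp => (hwsph p.1 hp.1).1)).sub
        (continuousOn_const.mul continuousOn_snd)).sub
        (continuousOn_const.div continuousOn_snd fun p hp => (hzsph p.2 hp.2).1)
    · exact (((continuousOn_snd.sub continuousOn_const).pow n₂).mul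
        (ContinuousOn.zpow₀ continuousOn_fst _ fun p hp => Or.inl (hwsph p.1 hp.1).1)).mul
        (continuousOn_fst.sub continuousOn_snd)
    · intro p hp
      refine mul_ne_zero (mul_ne_zero (pow_ne_zero _ (sub_ne_zero.2 (hzsph p.2 hp.2).2))
        (zpow_ne_zero _ (hwsph p.1 hp.1).1)) (sub_ne_zero.2 ?_)
      exact (hball p.1 hp.1 p.2 (Metric.sphere_subset_closedBall hp.2)).2
  -- differentiability of X w on the closed small ball, for w on the big sphere
  have hXd : ∀ w ∈ Metric.sphere (1 : ℂ) R, ∀ z ∈ Metric.closedBall (1 : ℂ) r,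
      DifferentiableAt ℂ (X w) z := by
    intro w hw z hz
    obtain ⟨hz0, hwz⟩ := hball w hw z hz
    simp only [hX]
    refine DifferentiableAt.div ?_ (by fun_prop) (sub_ne_zero.2 hwz)
    refine ((DifferentiableAt.mul ?_ (differentiableAt_const _)).mul
      (differentiableAt_zpow.mpr (Or.inl hz0))).mul (differentiableAt_const _)
    refine DifferentiableAt.cexp ?_
    exact (((differentiableAt_const _).sub
      ((differentiableAt_const _).mul differentiableAt_id)).sub
      ((differentiableAt_const _).div differentiableAt_id hz0))
  -- inner identity: for w on the big sphere
  have inner : ∀ w ∈ Metric.sphere (1 : ℂ) R,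
      ∑ k ∈ Finset.Icc 1 n₂, F k w * (∮ z in C(1, r), G k z) = ∮ z in C(1, r), M w z := by
    intro w hw
    obtain ⟨hw0, hw1⟩ := hwsph w hw
    have h1 : ∀ k ∈ Finset.Icc 1 n₂, F k w * (∮ z in C(1, r), G k z)
        = ∮ z in C(1, r), F k w * G k z :=
      fun k _ => (circleIntegral.integral_const_mul _ _ _ _).symm
    rw [Finset.sum_congr rfl h1,
      ← circleIntegral_finset_sum _ (fun k z => F k w * G k z) _ _
        (fun k _ => (continuousOn_const.mul (hGc k)).circleIntegrable hr0')]
    have h2 : Set.EqOn (fun z => ∑ k ∈ Finset.Icc 1 n₂, F k w * G k z)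
        (fun z => M w z - X w z) (Metric.sphere (1 : ℂ) r) := by
      intro z hz
      obtain ⟨hz0, hz1⟩ := hzsph z hz
      have hwz : w ≠ z := (hball w hw z (Metric.sphere_subset_closedBall hz)).2
      simp only [hF, hG, hM, hX]
      exact key_pointwise n₁ n₂ x₁ x₂ a₁ b₁ a₂ b₂ hw0 hw1 hz1 hwz
    rw [circleIntegral.integral_congr hr0' h2]
    have hMint : CircleIntegrable (M w) 1 r := by
      refine (ContinuousOn.circleIntegrable hr0' ?_)
      have : ContinuousOn (fun z : ℂ => (fun p : ℂ × ℂ => M p.1 p.2) (w, z))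
          (Metric.sphere (1 : ℂ) r) := by
        refine hMc.comp (Continuous.continuousOn (by fun_prop)) ?_
        intro z hz; exact ⟨hw, hz⟩
      exact this
    have hXint : CircleIntegrable (X w) 1 r := by
      refine ContinuousOn.circleIntegrable hr0' fun z hz => ?_
      exact (hXd w hw z (Metric.sphere_subset_closedBall hz)).continuousAt.continuousWithinAt
    rw [circleIntegral.integral_sub hMint hXint]
    have hXzero : (∮ z in C(1, r), X w z) = 0 := by
      refine circleIntegral_eq_zero_of_differentiable_on_off_countable hr0'
        Set.countable_empty (fun z hz => (hXd w hw z hz).continuousAt.continuousWithinAt)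
        (fun z hz => hXd w hw z (Metric.ball_subset_closedBall hz.1))
    rw [hXzero, sub_zero]
  -- main computation
  calc ∑ k ∈ Finset.Icc 1 n₂, (c0 * ∮ w in C(1, R), F k w) * (c0 * ∮ z in C(1, r), G k z)
      = c0 * c0 * ∑ k ∈ Finset.Icc 1 n₂,
          ∮ w in C(1, R), F k w * (∮ z in C(1, r), G k z) := by
        rw [Finset.mul_sum]
        refine Finset.sum_congr rfl fun k _ => ?_
        have hs := circleIntegral.integral_smul_const (F k) (∮ z in C(1, r), G k z) 1 R
        simp only [smul_eq_mul] at hs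
        rw [hs]
        ring
    _ = c0 * c0 * ∮ w in C(1, R), ∑ k ∈ Finset.Icc 1 n₂,
          F k w * (∮ z in C(1, r), G k z) := by
        rw [circleIntegral_finset_sum _ (fun k w => F k w * ∮ z in C(1, r), G k z) _ _
          (fun k _ => ((hFc k).mul continuousOn_const).circleIntegrable hR0)]
    _ = c0 * c0 * ∮ w in C(1, R), ∮ z in C(1, r), M w z := by
        rw [circleIntegral.integral_congr hR0 fun w hw => inner w hw]
    _ = c0 * c0 * ∮ z in C(1, r), ∮ w in C(1, R), M w z := by
        have cw : Continuous fun p : ℝ × ℝ => circleMap 1 R p.1 :=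
          (continuous_circleMap 1 R).comp continuous_fst
        have cz : Continuous fun p : ℝ × ℝ => circleMap 1 r p.2 :=
          (continuous_circleMap 1 r).comp continuous_snd
        have hw' : ∀ θ : ℝ, circleMap 1 R θ ∈ Metric.sphere (1 : ℂ) R := fun θ => by
          simpa using circleMap_mem_sphere (1 : ℂ) hR0 θ
        have hz' : ∀ θ : ℝ, circleMap 1 r θ ∈ Metric.sphere (1 : ℂ) r := fun θ => by
          simpa using circleMap_mem_sphere (1 : ℂ) hr0' θ
        have hw0 : ∀ p : ℝ × ℝ, circleMap 1 R p.1 ≠ 0 := fun p => (hwsph _ (hw' p.1)).1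
        have hz0 : ∀ p : ℝ × ℝ, circleMap 1 r p.2 ≠ 0 := fun p => (hzsph _ (hz' p.2)).1
        have hz1 : ∀ p : ℝ × ℝ, circleMap 1 r p.2 ≠ 1 := fun p => (hzsph _ (hz' p.2)).2
        have hwz : ∀ p : ℝ × ℝ, circleMap 1 R p.1 ≠ circleMap 1 r p.2 := fun p =>
          (hball _ (hw' p.1) _ (Metric.sphere_subset_closedBall (hz' p.2))).2
        have hcont : Continuous fun p : ℝ × ℝ => M (circleMap 1 R p.1) (circleMap 1 r p.2) := by
          simp only [hM]
          refine Continuous.div ?_ ?_ ?_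
          · refine ((Complex.continuous_exp.comp ?_).mul
              ((cw.sub continuous_const).pow n₁)).mul (cz.zpow₀ _ fun p => Or.inl (hz0 p))
            exact (((continuous_const.mul cw).add
              ((continuous_const.div cw) hw0)).sub (continuous_const.mul cz)).sub
              ((continuous_const.div cz) hz0)
          · exact (((cz.sub continuous_const).pow n₂).mul
              (cw.zpow₀ _ fun p => Or.inl (hw0 p))).mul (cw.sub cz)
          · intro p
            exact mul_ne_zero (mul_ne_zero (pow_ne_zero _ (sub_ne_zero.2 (hz1 p)))
              (zpow_ne_zero _ (hw0 p))) (sub_ne_zero.2 (hwz p))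
        exact congrArg (fun t => c0 * c0 * t) (circleIntegral_swap M 1 1 R r hcont)
    _ = c0 * ∮ z in C(1, r), c0 * ∮ w in C(1, R), M w z := by
        have hcm := circleIntegral.integral_const_mul c0 (fun z => ∮ w in C(1, R), M w z) 1 r
        rw [hcm, ← mul_assoc]
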